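/- For the ellipse x² + y²/b² = 1 with 0 < b < 1, the integral of the 2/3 power of the curvature with respect to arc length equals C = 4 b^{2/3} K(1 − b²), where K is the complete elliptic integral of the first kind. -/
import Mathlib


open Real

/-- The complete elliptic integral of the first kind. -/
noncomputable def ellipticK (m : ℝ) : ℝ :=
  ∫ θ in (0 : ℝ)..(π / 2), (1 - m * Real.sin θ ^ 2) ^ (-(1 : ℝ) / 2)

/-- For the ellipse `x² + y²/b² = 1` with `0 < b < 1`, the integral of `κ^{2/3}` with
respect to arc length equals `C = 4 b^{2/3} K(1 − b²)`. -/
theorem ellipse_curvature_integral (b : ℝ) (hb0 : 0 < b) (hb1 : b < 1) :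
    (∫ φ in (0 : ℝ)..(2 * π),
        (b / (Real.sin φ ^ 2 + b ^ 2 * Real.cos φ ^ 2) ^ ((3 : ℝ) / 2)) ^ ((2 : ℝ) / 3) *
          (Real.sin φ ^ 2 + b ^ 2 * Real.cos φ ^ 2) ^ ((1 : ℝ) / 2))
      = 4 * b ^ ((2 : ℝ) / 3) * ellipticK (1 - b ^ 2) := by
  have hA : ∀ φ : ℝ, 0 < Real.sin φ ^ 2 + b ^ 2 * Real.cos φ ^ 2 := by
    intro φ
    nlinarith [Real.sin_sq_add_cos_sq φ, sq_nonneg (Real.sin φ), sq_nonneg (Real.cos φ),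
      mul_pos hb0 hb0, sq_nonneg (b * Real.sin φ), sq_nonneg (b * Real.cos φ)]
  set h : ℝ → ℝ := fun φ => (Real.sin φ ^ 2 + b ^ 2 * Real.cos φ ^ 2) ^ (-(1 : ℝ) / 2) with hh
  have hcont : Continuous h := by
    apply Continuous.rpow_const (by continuity) fun x => Or.inl (hA x).ne'
  -- Step 1: rewrite the integrand
  have hstep1 : (∫ φ in (0 : ℝ)..(2 * π),
        (b / (Real.sin φ ^ 2 + b ^ 2 * Real.cos φ ^ 2) ^ ((3 : ℝ) / 2)) ^ ((2 : ℝ) / 3) *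
          (Real.sin φ ^ 2 + b ^ 2 * Real.cos φ ^ 2) ^ ((1 : ℝ) / 2))
      = b ^ ((2 : ℝ) / 3) * ∫ φ in (0 : ℝ)..(2 * π), h φ := by
    rw [← intervalIntegral.integral_const_mul]
    apply intervalIntegral.integral_congr
    intro φ _
    dsimp only
    have hAφ := hA φ
    set A := Real.sin φ ^ 2 + b ^ 2 * Real.cos φ ^ 2 with hAdef
    have h1 : (A ^ ((3 : ℝ) / 2)) ^ ((2 : ℝ) / 3) = A := by
      rw [← Real.rpow_mul hAφ.le]; norm_num
    have e : (-(1 : ℝ) / 2) = (1 : ℝ) / 2 - 1 := by norm_num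
    rw [Real.div_rpow hb0.le (Real.rpow_nonneg hAφ.le _), h1]
    simp only [hh]
    rw [e, Real.rpow_sub hAφ, Real.rpow_one]
    ring
  -- pointwise symmetry facts
  have base : ∀ θ : ℝ, Real.cos θ ^ 2 + b ^ 2 * Real.sin θ ^ 2
      = 1 - (1 - b ^ 2) * Real.sin θ ^ 2 := by
    intro θ
    linear_combination Real.sin_sq_add_cos_sq θ
  set g : ℝ → ℝ := fun θ => (1 - (1 - b ^ 2) * Real.sin θ ^ 2) ^ (-(1 : ℝ) / 2) with hg
  have hI : IntervalIntegrable h MeasureTheory.volume 0 (2 * π) := hcont.intervalIntegrable _ _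
  have hpi : (0 : ℝ) < π := Real.pi_pos
  -- quarter 1
  have q1 : (∫ x in (0 : ℝ)..(π / 2), h x) = ∫ θ in (0 : ℝ)..(π / 2), g θ := by
    have := intervalIntegral.integral_comp_sub_left (a := (0 : ℝ)) (b := π / 2) h (π / 2)
    simp only [sub_self, sub_zero] at this
    rw [← this]
    apply intervalIntegral.integral_congr
    intro θ _
    simp only [hh, hg, Real.sin_pi_div_two_sub, Real.cos_pi_div_two_sub]
    rw [base θ]
  -- quarter 2
  have q2 : (∫ x in (π / 2)..π, h x) = ∫ θ in (0 : ℝ)..(π / 2), g θ := by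
    have := intervalIntegral.integral_comp_add_right (a := (0 : ℝ)) (b := π / 2) h (π / 2)
    simp only [zero_add] at this
    rw [show π / 2 + π / 2 = π by ring] at this
    rw [← this]
    apply intervalIntegral.integral_congr
    intro θ _
    simp only [hh, hg, Real.sin_add_pi_div_two, Real.cos_add_pi_div_two, neg_sq]
    rw [base θ]
  -- shift by π
  have shift : ∀ a c : ℝ, (∫ x in (a + π)..(c + π), h x) = ∫ x in a..c, h x := by
    intro a c
    rw [← intervalIntegral.integral_comp_add_right (a := a) (b := c) h π]
    apply intervalIntegral.integral_congr
    intro θ _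
    simp only [hh, Real.sin_add_pi, Real.cos_add_pi, neg_sq]
  have q3 : (∫ x in π..(3 * π / 2), h x) = ∫ θ in (0 : ℝ)..(π / 2), g θ := by
    have := shift 0 (π / 2)
    rw [zero_add, show π / 2 + π = 3 * π / 2 by ring] at this
    rw [this, q1]
  have q4 : (∫ x in (3 * π / 2)..(2 * π), h x) = ∫ θ in (0 : ℝ)..(π / 2), g θ := by
    have := shift (π / 2) π
    rw [show π / 2 + π = 3 * π / 2 by ring, show π + π = 2 * π by ring] at this
    rw [this, q2]
  -- split [0, 2π]
  have hii : ∀ a c : ℝ, IntervalIntegrable h MeasureTheory.volume a c :=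
    fun a c => hcont.intervalIntegrable _ _
  have split : (∫ x in (0 : ℝ)..(2 * π), h x)
      = (∫ x in (0 : ℝ)..(π / 2), h x) + (∫ x in (π / 2)..π, h x)
        + (∫ x in π..(3 * π / 2), h x) + (∫ x in (3 * π / 2)..(2 * π), h x) := by
    rw [intervalIntegral.integral_add_adjacent_intervals (hii 0 (π / 2)) (hii (π / 2) π),
      intervalIntegral.integral_add_adjacent_intervals (hii 0 π) (hii π (3 * π / 2)),
      intervalIntegral.integral_add_adjacent_intervals (hii 0 (3 * π / 2)) (hii (3 * π / 2) (2 * π))]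
  rw [hstep1, split, q1, q2, q3, q4]
  show b ^ ((2 : ℝ) / 3) * _ = _
  rw [ellipticK]
  ring
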